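/- Reachability closure in the characteristic-set tree: for every configuration p reachable in B^n and every shortest word w reaching p in B^n, the node labeled w appears in the tree T_n constructed by the CS-generation procedure, and its annotation equals p. -/

import Mathlib

/-- A broadcast protocol: initial state, for each action a unique sending
transition `sendSrc a --a!!--> sendTgt a`, and for each action and state
exactly one receiving transition `s --a??--> recv a s`. -/
structure BP (S A : Type) where
  init : S
  sendSrc : A → S
  sendTgt : A → S
  recv : A → S → S

namespace BP

variable {S A : Type}

/-- Initial configuration of `B^n`: all `n` processes in the initial state. -/
def initConfig [DecidableEq S] (B : BP S A) (n : ℕ) : S → ℕ :=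
  fun s => if s = B.init then n else 0

/-- Successor configuration on action `a`: the sender leaves `sendSrc a`,
all other processes take their receiving transitions, and the sender
arrives at `sendTgt a`. -/
def succ [Fintype S] [DecidableEq S] (B : BP S A) (a : A) (q : S → ℕ) : S → ℕ :=
  fun s =>
    (∑ t : S, if B.recv a t = s then q t - (if t = B.sendSrc a then 1 else 0) else 0) +
      (if s = B.sendTgt a then 1 else 0)

/-- Run of the system from a configuration along a word (the reached
configuration does not depend on which lit process sends). -/
def runFrom [Fintype S] [DecidableEq S] (B : BP S A) : (S → ℕ) → List A → Option (S → ℕ)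
  | q, [] => some q
  | q, a :: w => if 1 ≤ q (B.sendSrc a) then B.runFrom (B.succ a q) w else none

/-- Configuration reached by `B^n` on word `w` (if `w` is feasible). -/
def cfg [Fintype S] [DecidableEq S] (B : BP S A) (n : ℕ) (w : List A) : Option (S → ℕ) :=
  B.runFrom (B.initConfig n) w

/-- `w` is feasible in `B^n`. -/
def Feasible [Fintype S] [DecidableEq S] (B : BP S A) (n : ℕ) (w : List A) : Prop :=
  (B.cfg n w).isSome

end BP

/-- `B` is fine: no hidden states and it has a cutoff. -/
def BP.Fine {S A : Type} [Fintype S] [DecidableEq S] (B : BP S A) : Prop :=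
  (∀ s : S, ∃ a : A, B.sendSrc a = s) ∧
  ∃ c : ℕ, ∀ k, c < k → ∀ w : List A, B.Feasible k w ↔ B.Feasible c w

/-- Nodes of the tree `T_n` built by the characteristic-set generation
procedure: `T_0` has only the root `ε`; `T_{n+1}` contains all nodes of `T_n`,
and for every node `w` that is positive (feasible) in `B^{n+1}` and not
declared a leaf — i.e., `w` is not of the form `v ++ [b]` with a strict
prefix `u` of `v` reaching the same configuration of `B^{n+1}` as `v` — all
its children `w ++ [a]` are added. -/
inductive BP.TreeNode {S A : Type} [Fintype S] [DecidableEq S] (B : BP S A) :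
    ℕ → List A → Prop
  | root (n : ℕ) : BP.TreeNode B n []
  | prev (n : ℕ) (w : List A) : BP.TreeNode B n w → BP.TreeNode B (n + 1) w
  | child (n : ℕ) (w : List A) (a : A) :
      BP.TreeNode B (n + 1) w → B.Feasible (n + 1) w →
      (∀ (v : List A) (b : A), w = v ++ [b] →
        ¬ ∃ u : List A, u <+: v ∧ u ≠ v ∧ B.cfg (n + 1) u = B.cfg (n + 1) v) →
      BP.TreeNode B (n + 1) (w ++ [a])

/-- for every configuration `p` reachable in `B^n` and every
shortest word `w` reaching `p` in `B^n`, the node `w` appears in the tree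
`T_n` (its annotation is `B^n(w) = p` by definition). -/
lemma BP.runFrom_append {S A : Type} [Fintype S] [DecidableEq S] (B : BP S A)
    (q : S → ℕ) (u t : List A) :
    B.runFrom q (u ++ t) = (B.runFrom q u).bind (fun q' => B.runFrom q' t) := by
  induction u generalizing q with
  | nil => simp [BP.runFrom]
  | cons a u ih =>
    simp only [List.cons_append, BP.runFrom]
    split
    · exact ih _
    · simp

lemma BP.cfg_append {S A : Type} [Fintype S] [DecidableEq S] (B : BP S A)
    (n : ℕ) (u t : List A) :
    B.cfg n (u ++ t) = (B.cfg n u).bind (fun q' => B.runFrom q' t) :=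
  B.runFrom_append _ u t

theorem BP.treeNode_of_shortest {S A : Type} [Fintype S] [DecidableEq S]
    (B : BP S A) (hfine : B.Fine) (n : ℕ) (p : S → ℕ) (w : List A)
    (hw : B.cfg n w = some p)
    (hshort : ∀ w' : List A, B.cfg n w' = some p → w.length ≤ w'.length) :
    B.TreeNode n w := by
  cases n with
  | zero =>
    cases w with
    | nil => exact .root 0
    | cons a t =>
      exfalso
      simp [BP.cfg, BP.runFrom, BP.initConfig] at hw
  | succ m =>
    induction w using List.reverseRecOn generalizing p with
    | nil => exact .root (m + 1)
    | append_singleton v a ih =>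
      rw [B.cfg_append] at hw
      obtain ⟨q, hq, hqa⟩ := Option.bind_eq_some_iff.mp hw
      have hqshort : ∀ v' : List A, B.cfg (m + 1) v' = some q → v.length ≤ v'.length := by
        intro v' hv'
        have : B.cfg (m + 1) (v' ++ [a]) = some p := by
          rw [B.cfg_append, hv']; exact hqa
        have := hshort _ this
        simpa using this
      have hv : B.TreeNode (m + 1) v := ih q hq hqshort
      have hfeas : B.Feasible (m + 1) v := by
        simp [BP.Feasible, hq]
      refine .child m v a hv hfeas ?_
      rintro v' b hvb ⟨u, hpre, hne, hcfg⟩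
      have hlt : u.length < v'.length :=
        Nat.lt_of_le_of_ne hpre.length_le (fun h => hne (hpre.eq_of_length h))
      have hcu : B.cfg (m + 1) (u ++ ([b] ++ [a])) = some p := by
        rw [B.cfg_append, hcfg, ← B.cfg_append, ← List.append_assoc, ← hvb, B.cfg_append, hq]
        exact hqa
      have := hshort _ hcu
      simp [hvb] at this
      omega
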